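/- For each i ∈ {0,…,n−1}, the weighted squared error of the linear interpolant on a single subinterval satisfies ∫_{X_i}^{X_{i+1}} (L_i(S) − f(S))² g(S) dS ≤ 2 h_i⁴ ∫_{X_i}^{X_{i+1}} G(S) (f″(S))² dS. -/

import Mathlib

open MeasureTheory intervalIntegral
open Set

/-- `Ĝ_i` transported to the subinterval `[a, b]`:
`G(S) = Ĝ_i((S - a)/(b - a))` where `ĝ_i(ξ) = g(a + (b - a)ξ)` and
`Ĝ_i(t) = ∫_0^t ĝ_i(ξ) ξ²(1-ξ)³/3 dξ + ∫_t^1 ĝ_i(ξ) (1-ξ)²ξ³/3 dξ`. -/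
noncomputable def weightG (g : ℝ → ℝ) (a b S : ℝ) : ℝ :=
    (∫ ξ in (0:ℝ)..((S - a) / (b - a)), g (a + (b - a) * ξ) * (ξ ^ 2 * (1 - ξ) ^ 3 / 3))
  + (∫ ξ in ((S - a) / (b - a))..(1:ℝ), g (a + (b - a) * ξ) * ((1 - ξ) ^ 2 * ξ ^ 3 / 3))

/-- Linear interpolant of `f` on `[a, b]`:
`L(S) = ((b - S)/(b - a)) f(a) + ((S - a)/(b - a)) f(b)`. -/
noncomputable def splineL (f : ℝ → ℝ) (a b S : ℝ) : ℝ :=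
  ((b - S) / (b - a)) * f a + ((S - a) / (b - a)) * f b


lemma cs_integral {a c : ℝ} (hac : a ≤ c) {u v : ℝ → ℝ}
    (hu : ContinuousOn u (Set.Icc a c)) (hv : ContinuousOn v (Set.Icc a c)) :
    (∫ t in a..c, u t * v t) ^ 2 ≤ (∫ t in a..c, u t ^ 2) * (∫ t in a..c, v t ^ 2) := by
  have huI : uIcc a c = Icc a c := uIcc_of_le hac
  have huu : IntervalIntegrable (fun t => u t ^ 2) volume a c := by
    apply ContinuousOn.intervalIntegrable; rw [huI]; exact (hu.pow 2)
  have hvv : IntervalIntegrable (fun t => v t ^ 2) volume a c := by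
    apply ContinuousOn.intervalIntegrable; rw [huI]; exact (hv.pow 2)
  have huv : IntervalIntegrable (fun t => u t * v t) volume a c := by
    apply ContinuousOn.intervalIntegrable; rw [huI]; exact (hu.mul hv)
  set I0 := ∫ t in a..c, u t ^ 2 with hI0
  set I1 := ∫ t in a..c, u t * v t with hI1
  set I2 := ∫ t in a..c, v t ^ 2 with hI2
  have key : ∀ l : ℝ, 0 ≤ I2 * (l * l) + (-2 * I1) * l + I0 := by
    intro l
    have h1 : (0:ℝ) ≤ ∫ t in a..c, (l * v t - u t) ^ 2 :=
      intervalIntegral.integral_nonneg hac (fun t _ => sq_nonneg _)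
    have h2 : (∫ t in a..c, (l * v t - u t) ^ 2)
        = I2 * (l * l) + (-2 * I1) * l + I0 := by
      have e : ∀ t, (l * v t - u t) ^ 2
          = (l * l) * v t ^ 2 + (-2 * l) * (u t * v t) + u t ^ 2 := fun t => by ring
      simp only [e]
      rw [intervalIntegral.integral_add ((hvv.const_mul _).add (huv.const_mul _)) huu,
        intervalIntegral.integral_add (hvv.const_mul _) (huv.const_mul _),
        intervalIntegral.integral_const_mul, intervalIntegral.integral_const_mul]
      ring
    linarith [h2 ▸ h1]
  have hd := discrim_le_zero key
  rw [discrim] at hd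
  nlinarith [hd]

lemma key_lemma (a b : ℝ) (hab : a < b) (f f' F g : ℝ → ℝ)
    (hfc : ContinuousOn f (Set.Icc a b)) (hf'c : ContinuousOn f' (Set.Icc a b))
    (hFc : Continuous F) (hgc : Continuous g) (hg0 : ∀ x, 0 ≤ g x)
    (hfd : ∀ x ∈ Set.Ioo a b, HasDerivAt f (f' x) x)
    (hf'd : ∀ x ∈ Set.Ioo a b, HasDerivAt f' (F x) x) :
    ∫ S in a..b, (splineL f a b S - f S) ^ 2 * g S
      ≤ 2 * (b - a) ^ 4 * ∫ S in a..b, weightG g a b S * F S ^ 2 := by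
  have hab' : a ≤ b := hab.le
  set h : ℝ := b - a with hh
  have hhpos : 0 < h := by simp [hh]; linarith
  have hne : h ≠ 0 := ne_of_gt hhpos
  -- abbreviations
  set P₁ : ℝ → ℝ := fun S => ∫ t in a..S, (t - a) * F t with hP₁
  set P₂ : ℝ → ℝ := fun S => ∫ t in S..b, (b - t) * F t with hP₂
  set Q₁ : ℝ → ℝ := fun S => ∫ t in a..S, F t ^ 2 with hQ₁
  set Q₂ : ℝ → ℝ := fun S => ∫ t in S..b, F t ^ 2 with hQ₂
  set w₁ : ℝ → ℝ := fun S => g S * ((S - a) ^ 2 * (b - S) ^ 3) with hw₁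
  set w₂ : ℝ → ℝ := fun S => g S * ((b - S) ^ 2 * (S - a) ^ 3) with hw₂
  set H₁ : ℝ → ℝ := fun t => ∫ S in a..t, w₁ S with hH₁
  set H₂ : ℝ → ℝ := fun t => ∫ S in t..b, w₂ S with hH₂
  have hw₁c : Continuous w₁ := by fun_prop
  have hw₂c : Continuous w₂ := by fun_prop
  have hF2c : Continuous (fun t : ℝ => F t ^ 2) := by fun_prop
  -- derivatives of primitives
  have hQ₁d : ∀ x : ℝ, HasDerivAt Q₁ (F x ^ 2) x := fun x =>
    intervalIntegral.integral_hasDerivAt_right (hF2c.intervalIntegrable a x)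
      (hF2c.stronglyMeasurableAtFilter _ _) hF2c.continuousAt
  have hQ₂d : ∀ x : ℝ, HasDerivAt Q₂ (-(F x ^ 2)) x := fun x =>
    intervalIntegral.integral_hasDerivAt_left (hF2c.intervalIntegrable x b)
      (hF2c.stronglyMeasurableAtFilter _ _) hF2c.continuousAt
  have hH₁d : ∀ x : ℝ, HasDerivAt H₁ (w₁ x) x := fun x =>
    intervalIntegral.integral_hasDerivAt_right (hw₁c.intervalIntegrable a x)
      (hw₁c.stronglyMeasurableAtFilter _ _) hw₁c.continuousAt
  have hH₂d : ∀ x : ℝ, HasDerivAt H₂ (-(w₂ x)) x := fun x =>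
    intervalIntegral.integral_hasDerivAt_left (hw₂c.intervalIntegrable x b)
      (hw₂c.stronglyMeasurableAtFilter _ _) hw₂c.continuousAt
  have hQ₁c : Continuous Q₁ := by
    rw [continuous_iff_continuousAt]; exact fun x => (hQ₁d x).continuousAt
  have hQ₂c : Continuous Q₂ := by
    rw [continuous_iff_continuousAt]; exact fun x => (hQ₂d x).continuousAt
  have hH₁c : Continuous H₁ := by
    rw [continuous_iff_continuousAt]; exact fun x => (hH₁d x).continuousAt
  have hH₂c : Continuous H₂ := by
    rw [continuous_iff_continuousAt]; exact fun x => (hH₂d x).continuousAt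
  -- Step A : Peano representation
  have stepA : ∀ S ∈ Icc a b,
      splineL f a b S - f S = ((b - S) / h) * P₁ S + ((S - a) / h) * P₂ S := by
    intro S hS
    have e1 : P₁ S = (S - a) * f' S - f S + f a := by
      have hcont : ContinuousOn (fun t => (t - a) * f' t - f t) (Icc a S) := by
        apply ContinuousOn.sub
        · exact (ContinuousOn.mul (by fun_prop)
            (hf'c.mono (Icc_subset_Icc le_rfl hS.2)))
        · exact hfc.mono (Icc_subset_Icc le_rfl hS.2)
      have hderiv : ∀ x ∈ Ioo a S,
          HasDerivWithinAt (fun t => (t - a) * f' t - f t) ((x - a) * F x) (Ioi x) x := by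
        intro x hx
        have hx' : x ∈ Ioo a b := ⟨hx.1, lt_of_lt_of_le hx.2 hS.2⟩
        have h1 : HasDerivAt (fun t => (t - a) * f' t - f t)
            ((1 * f' x + (x - a) * F x) - f' x) x :=
          ((((hasDerivAt_id x).sub_const a).mul (hf'd x hx'))).sub (hfd x hx')
        have : (1 * f' x + (x - a) * F x) - f' x = (x - a) * F x := by ring
        rw [this] at h1
        exact h1.hasDerivWithinAt
      have hint : IntervalIntegrable (fun t => (t - a) * F t) volume a S := by
        apply Continuous.intervalIntegrable; fun_prop
      have := intervalIntegral.integral_eq_sub_of_hasDeriv_right_of_le hS.1 hcont hderiv hint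
      simp only [hP₁]
      rw [this]; ring
    have e2 : P₂ S = f b - ((b - S) * f' S + f S) := by
      have hcont : ContinuousOn (fun t => (b - t) * f' t + f t) (Icc S b) := by
        apply ContinuousOn.add
        · exact (ContinuousOn.mul (by fun_prop)
            (hf'c.mono (Icc_subset_Icc hS.1 le_rfl)))
        · exact hfc.mono (Icc_subset_Icc hS.1 le_rfl)
      have hderiv : ∀ x ∈ Ioo S b,
          HasDerivWithinAt (fun t => (b - t) * f' t + f t) ((b - x) * F x) (Ioi x) x := by
        intro x hx
        have hx' : x ∈ Ioo a b := ⟨lt_of_le_of_lt hS.1 hx.1, hx.2⟩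
        have h1 : HasDerivAt (fun t => (b - t) * f' t + f t)
            (((0 - 1) * f' x + (b - x) * F x) + f' x) x :=
          (((hasDerivAt_const x b).sub (hasDerivAt_id x)).mul (hf'd x hx')).add (hfd x hx')
        have : ((0 - 1) * f' x + (b - x) * F x) + f' x = (b - x) * F x := by ring
        rw [this] at h1
        exact h1.hasDerivWithinAt
      have hint : IntervalIntegrable (fun t => (b - t) * F t) volume S b := by
        apply Continuous.intervalIntegrable; fun_prop
      have := intervalIntegral.integral_eq_sub_of_hasDeriv_right_of_le hS.2 hcont hderiv hint
      simp only [hP₂]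
      rw [this]; ring
    rw [e1, e2]
    simp only [splineL, hh]
    field_simp [sub_ne_zero.mpr hab.ne']
    ring
  -- Step B : pointwise bound
  have stepB : ∀ S ∈ Icc a b,
      (splineL f a b S - f S) ^ 2 * g S
        ≤ 2 / (3 * h ^ 2) * (w₂ S * Q₁ S + w₁ S * Q₂ S) := by
    intro S hS
    have hc1 : (0:ℝ) ≤ b - S := by linarith [hS.2]
    have hc2 : (0:ℝ) ≤ S - a := by linarith [hS.1]
    have hQ₁0 : 0 ≤ Q₁ S := intervalIntegral.integral_nonneg hS.1 (fun t _ => sq_nonneg _)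
    have hQ₂0 : 0 ≤ Q₂ S := intervalIntegral.integral_nonneg hS.2 (fun t _ => sq_nonneg _)
    have hP1sq : (P₁ S) ^ 2 ≤ ((S - a) ^ 3 / 3) * Q₁ S := by
      have hcs := cs_integral hS.1 (u := fun t => t - a) (v := F)
        (by fun_prop) (hFc.continuousOn)
      have hu2 : (∫ t in a..S, (t - a) ^ 2) = (S - a) ^ 3 / 3 := by
        have := intervalIntegral.integral_comp_sub_right (fun x => x ^ 2) a (a := a) (b := S)
        rw [this]
        simp [integral_pow]
        norm_num
      rw [hu2] at hcs
      exact hcs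
    have hP2sq : (P₂ S) ^ 2 ≤ ((b - S) ^ 3 / 3) * Q₂ S := by
      have hcs := cs_integral hS.2 (u := fun t => b - t) (v := F)
        (by fun_prop) (hFc.continuousOn)
      have hu2 : (∫ t in S..b, (b - t) ^ 2) = (b - S) ^ 3 / 3 := by
        have e : ∀ t, (b - t) ^ 2 = (t - b) ^ 2 := fun t => by ring
        simp only [e]
        have := intervalIntegral.integral_comp_sub_right (fun x => x ^ 2) b (a := S) (b := b)
        rw [this]
        simp [integral_pow]
        norm_num
        ring
      rw [hu2] at hcs
      exact hcs
    rw [stepA S hS]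
    set p := P₁ S
    set q := P₂ S
    have key : ((b - S) / h * p + (S - a) / h * q) ^ 2
        ≤ 2 / (3 * h ^ 2) * ((b - S) ^ 2 * (S - a) ^ 3 * Q₁ S + (S - a) ^ 2 * (b - S) ^ 3 * Q₂ S) := by
      have h1 : ((b - S) / h * p + (S - a) / h * q) ^ 2
          ≤ 2 * (((b - S) / h) ^ 2 * p ^ 2) + 2 * (((S - a) / h) ^ 2 * q ^ 2) := by
        nlinarith [sq_nonneg ((b - S) / h * p - (S - a) / h * q)]
      have h2 : ((b - S) / h) ^ 2 * p ^ 2 ≤ ((b - S) / h) ^ 2 * (((S - a) ^ 3 / 3) * Q₁ S) :=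
        mul_le_mul_of_nonneg_left hP1sq (sq_nonneg _)
      have h3 : ((S - a) / h) ^ 2 * q ^ 2 ≤ ((S - a) / h) ^ 2 * (((b - S) ^ 3 / 3) * Q₂ S) :=
        mul_le_mul_of_nonneg_left hP2sq (sq_nonneg _)
      have e : 2 * (((b - S) / h) ^ 2 * (((S - a) ^ 3 / 3) * Q₁ S))
          + 2 * (((S - a) / h) ^ 2 * (((b - S) ^ 3 / 3) * Q₂ S))
          = 2 / (3 * h ^ 2) * ((b - S) ^ 2 * (S - a) ^ 3 * Q₁ S + (S - a) ^ 2 * (b - S) ^ 3 * Q₂ S) := by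
        field_simp
      linarith
    calc ((b - S) / h * p + (S - a) / h * q) ^ 2 * g S
        ≤ (2 / (3 * h ^ 2) * ((b - S) ^ 2 * (S - a) ^ 3 * Q₁ S + (S - a) ^ 2 * (b - S) ^ 3 * Q₂ S)) * g S :=
          mul_le_mul_of_nonneg_right key (hg0 S)
      _ = 2 / (3 * h ^ 2) * (w₂ S * Q₁ S + w₁ S * Q₂ S) := by
          simp only [hw₁, hw₂]; ring
  -- Step C : integrate the pointwise bound
  have hLHSint : IntervalIntegrable (fun S => (splineL f a b S - f S) ^ 2 * g S) volume a b := by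
    apply ContinuousOn.intervalIntegrable
    rw [uIcc_of_le hab']
    apply ContinuousOn.mul _ hgc.continuousOn
    apply ContinuousOn.pow
    apply ContinuousOn.sub _ hfc
    apply Continuous.continuousOn
    unfold splineL; fun_prop
  have hRHSint : IntervalIntegrable
      (fun S => 2 / (3 * h ^ 2) * (w₂ S * Q₁ S + w₁ S * Q₂ S)) volume a b := by
    apply Continuous.intervalIntegrable
    fun_prop
  have stepC : ∫ S in a..b, (splineL f a b S - f S) ^ 2 * g S
      ≤ ∫ S in a..b, 2 / (3 * h ^ 2) * (w₂ S * Q₁ S + w₁ S * Q₂ S) :=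
    intervalIntegral.integral_mono_on hab' hLHSint hRHSint stepB
  -- Step D : integration by parts (Fubini-type swap)
  have stepD1 : ∫ S in a..b, w₂ S * Q₁ S = ∫ t in a..b, F t ^ 2 * H₂ t := by
    have parts := intervalIntegral.integral_mul_deriv_eq_deriv_mul
      (u := Q₁) (u' := fun t => F t ^ 2) (v := H₂) (v' := fun S => -(w₂ S))
      (fun x _ => hQ₁d x) (fun x _ => hH₂d x)
      (hF2c.intervalIntegrable a b) ((hw₂c.neg).intervalIntegrable a b)
    have hQa : Q₁ a = 0 := intervalIntegral.integral_same
    have hHb : H₂ b = 0 := intervalIntegral.integral_same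
    have e1 : (∫ x in a..b, Q₁ x * -(w₂ x)) = -∫ x in a..b, w₂ x * Q₁ x := by
      rw [← intervalIntegral.integral_neg]
      congr 1; funext x; ring
    rw [e1, hQa, hHb] at parts
    have e2 : (∫ x in a..b, F x ^ 2 * H₂ x) = ∫ x in a..b, F x ^ 2 * H₂ x := rfl
    linarith [parts]
  have stepD2 : ∫ S in a..b, w₁ S * Q₂ S = ∫ t in a..b, F t ^ 2 * H₁ t := by
    have parts := intervalIntegral.integral_mul_deriv_eq_deriv_mul
      (u := Q₂) (u' := fun t => -(F t ^ 2)) (v := H₁) (v' := w₁)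
      (fun x _ => hQ₂d x) (fun x _ => hH₁d x)
      ((hF2c.neg).intervalIntegrable a b) (hw₁c.intervalIntegrable a b)
    have hQb : Q₂ b = 0 := intervalIntegral.integral_same
    have hHa : H₁ a = 0 := intervalIntegral.integral_same
    have e1 : (∫ x in a..b, Q₂ x * w₁ x) = ∫ x in a..b, w₁ x * Q₂ x := by
      congr 1; funext x; ring
    have e2 : (∫ x in a..b, -(F x ^ 2) * H₁ x) = -∫ x in a..b, F x ^ 2 * H₁ x := by
      rw [← intervalIntegral.integral_neg]
      congr 1; funext x; ring
    rw [e1, e2, hQb, hHa] at parts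
    linarith [parts]
  -- Step E : weightG in terms of H₁, H₂
  have stepE : ∀ t, weightG g a b t = (H₁ t + H₂ t) / (3 * h ^ 6) := by
    intro t
    have cov1 : (∫ ξ in (0:ℝ)..((t - a) / h), g (a + h * ξ) * (ξ ^ 2 * (1 - ξ) ^ 3 / 3))
        = H₁ t / (3 * h ^ 6) := by
      have e : ∀ ξ : ℝ, g (a + h * ξ) * (ξ ^ 2 * (1 - ξ) ^ 3 / 3)
          = (fun S => w₁ S / (3 * h ^ 5)) (a + h * ξ) := by
        intro ξ
        simp only [hw₁, hh]
        field_simp [sub_ne_zero.mpr hab.ne']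
        ring
      simp only [e]
      rw [intervalIntegral.integral_comp_add_mul (fun S => w₁ S / (3 * h ^ 5)) hne a]
      have : a + h * ((t - a) / h) = t := by field_simp; ring
      rw [mul_zero, add_zero, this]
      rw [intervalIntegral.integral_div]
      rw [show (∫ S in a..t, w₁ S) = H₁ t from rfl, smul_eq_mul]
      generalize H₁ t = A
      field_simp
      try ring
      try tauto
    have cov2 : (∫ ξ in ((t - a) / h)..(1:ℝ), g (a + h * ξ) * ((1 - ξ) ^ 2 * ξ ^ 3 / 3))
        = H₂ t / (3 * h ^ 6) := by
      have e : ∀ ξ : ℝ, g (a + h * ξ) * ((1 - ξ) ^ 2 * ξ ^ 3 / 3)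
          = (fun S => w₂ S / (3 * h ^ 5)) (a + h * ξ) := by
        intro ξ
        simp only [hw₂, hh]
        field_simp [sub_ne_zero.mpr hab.ne']
        ring
      simp only [e]
      rw [intervalIntegral.integral_comp_add_mul (fun S => w₂ S / (3 * h ^ 5)) hne a]
      have h1 : a + h * ((t - a) / h) = t := by field_simp; ring
      have h2 : a + h * 1 = b := by simp [hh]
      rw [h1, h2]
      rw [intervalIntegral.integral_div]
      rw [show (∫ S in t..b, w₂ S) = H₂ t from rfl, smul_eq_mul]
      generalize H₂ t = A
      field_simp
      try ring
      try tauto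
    simp only [weightG, ← hh]
    rw [cov1, cov2]
    ring
  -- Step F : final assembly
  have stepF : 2 * h ^ 4 * ∫ S in a..b, weightG g a b S * F S ^ 2
      = ∫ S in a..b, 2 / (3 * h ^ 2) * (w₂ S * Q₁ S + w₁ S * Q₂ S) := by
    have e : ∀ S, weightG g a b S * F S ^ 2
        = (H₁ S + H₂ S) / (3 * h ^ 6) * F S ^ 2 := fun S => by rw [stepE S]
    simp only [e]
    rw [← intervalIntegral.integral_const_mul]
    have eL : ∀ S, 2 * h ^ 4 * ((H₁ S + H₂ S) / (3 * h ^ 6) * F S ^ 2)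
        = 2 / (3 * h ^ 2) * (F S ^ 2 * H₁ S + F S ^ 2 * H₂ S) := by
      intro S; field_simp
    simp only [eL]
    rw [intervalIntegral.integral_const_mul, intervalIntegral.integral_const_mul]
    congr 1
    rw [intervalIntegral.integral_add (f := fun x => F x ^ 2 * H₁ x) (g := fun x => F x ^ 2 * H₂ x)
      ((hF2c.mul hH₁c).intervalIntegrable a b) ((hF2c.mul hH₂c).intervalIntegrable a b),
      intervalIntegral.integral_add (f := fun x => w₂ x * Q₁ x) (g := fun x => w₁ x * Q₂ x)
      ((hw₂c.mul hQ₁c).intervalIntegrable a b) ((hw₁c.mul hQ₂c).intervalIntegrable a b)]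
    rw [stepD1, stepD2]
    ring
  exact stepC.trans stepF.ge


/-- Single-subinterval weighted squared error bound:
`∫_{X_i}^{X_{i+1}} (L_i(S) − f(S))² g(S) dS ≤ 2 h_i⁴ ∫_{X_i}^{X_{i+1}} G(S)(f″(S))² dS`. -/
theorem single_interval_error_bound
    (n : ℕ) (hn : 1 ≤ n) (X : ℕ → ℝ) (hX0 : 0 < X 0)
    (hXmono : ∀ i < n, X i < X (i + 1))
    (f g : ℝ → ℝ)
    (hf : ContinuousOn f (Set.Icc (X 0) (X n)))
    (hf2 : ∀ i < n, ContDiffOn ℝ 2 f (Set.Icc (X i) (X (i + 1))))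
    (hg0 : ∀ S ∈ Set.Icc (X 0) (X n), 0 ≤ g S)
    (hgc : ContinuousOn g (Set.Icc (X 0) (X n)))
    (i : ℕ) (hi : i < n) :
    ∫ S in (X i)..(X (i + 1)), (splineL f (X i) (X (i + 1)) S - f S) ^ 2 * g S
      ≤ 2 * (X (i + 1) - X i) ^ 4 *
        ∫ S in (X i)..(X (i + 1)),
          weightG g (X i) (X (i + 1)) S * (deriv (deriv f) S) ^ 2 := by
  set a := X i with ha
  set b := X (i + 1) with hb
  have hab : a < b := hXmono i hi
  have hab' : a ≤ b := hab.le
  have step : ∀ j k, j + k ≤ n → X j ≤ X (j + k) := by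
    intro j k
    induction k with
    | zero => intro _; simp
    | succ m ih =>
      intro hjk
      have h1 : j + m < n := by omega
      calc X j ≤ X (j + m) := ih (by omega)
        _ ≤ X (j + m + 1) := (hXmono (j + m) h1).le
  have h0i : X 0 ≤ a := by simpa using step 0 i (by omega)
  have hbn : b ≤ X n := by
    have := step (i + 1) (n - (i + 1)) (by omega)
    rwa [show i + 1 + (n - (i + 1)) = n by omega] at this
  have hsub : Set.Icc a b ⊆ Set.Icc (X 0) (X n) := Set.Icc_subset_Icc h0i hbn
  -- clamp to [a,b]
  set c : ℝ → ℝ := fun x => max a (min b x) with hc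
  have hcc : Continuous c := continuous_const.max (continuous_const.min continuous_id)
  have hcmem : ∀ x, c x ∈ Set.Icc a b :=
    fun x => ⟨le_max_left _ _, max_le hab' (min_le_left _ _)⟩
  have hcfix : ∀ x ∈ Set.Icc a b, c x = x := by
    intro x hx
    simp only [hc]
    rw [min_eq_right hx.2, max_eq_right hx.1]
  set g' : ℝ → ℝ := fun x => g (c x) with hg'
  have hg'c : Continuous g' := hgc.comp_continuous hcc (fun x => hsub (hcmem x))
  have hg'0 : ∀ x, 0 ≤ g' x := fun x => hg0 _ (hsub (hcmem x))
  -- derivatives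
  have hu : UniqueDiffOn ℝ (Set.Icc a b) := uniqueDiffOn_Icc hab
  have hC2 : ContDiffOn ℝ 2 f (Set.Icc a b) := hf2 i hi
  set f' : ℝ → ℝ := derivWithin f (Set.Icc a b) with hf'
  have hC1' : ContDiffOn ℝ 1 f' (Set.Icc a b) := hC2.derivWithin hu (by norm_num)
  have hf'c : ContinuousOn f' (Set.Icc a b) := hC1'.continuousOn
  set F₀ : ℝ → ℝ := derivWithin f' (Set.Icc a b) with hF₀
  have hF₀c : ContinuousOn F₀ (Set.Icc a b) :=
    hC1'.continuousOn_derivWithin hu le_rfl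
  set F : ℝ → ℝ := fun x => F₀ (c x) with hF
  have hFc : Continuous F := hF₀c.comp_continuous hcc hcmem
  have hdiff : DifferentiableOn ℝ f (Set.Icc a b) := hC2.differentiableOn (by norm_num)
  have hdiff1 : DifferentiableOn ℝ f' (Set.Icc a b) := hC1'.differentiableOn (by norm_num)
  have hfd : ∀ x ∈ Set.Ioo a b, HasDerivAt f (f' x) x := by
    intro x hx
    have hnb : Set.Icc a b ∈ nhds x := Icc_mem_nhds hx.1 hx.2
    exact ((hdiff x (Set.Ioo_subset_Icc_self hx)).hasDerivWithinAt).hasDerivAt hnb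
  have hf'd : ∀ x ∈ Set.Ioo a b, HasDerivAt f' (F x) x := by
    intro x hx
    have hnb : Set.Icc a b ∈ nhds x := Icc_mem_nhds hx.1 hx.2
    have h1 := ((hdiff1 x (Set.Ioo_subset_Icc_self hx)).hasDerivWithinAt).hasDerivAt hnb
    have h2 : F x = F₀ x := by
      simp only [hF]
      rw [hcfix x (Set.Ioo_subset_Icc_self hx)]
    rw [h2]
    exact h1
  have key := key_lemma a b hab f f' F g'
    (hf.mono hsub) hf'c hFc hg'c hg'0 hfd hf'd
  -- convert LHS
  have eqL : ∫ S in a..b, (splineL f a b S - f S) ^ 2 * g S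
      = ∫ S in a..b, (splineL f a b S - f S) ^ 2 * g' S := by
    apply intervalIntegral.integral_congr
    intro S hS
    rw [Set.uIcc_of_le hab'] at hS
    simp only [hg']
    rw [hcfix S hS]
  -- convert RHS
  have hae : ∀ᵐ x : ℝ, x ≠ b := by
    have hset : {x : ℝ | ¬ x ≠ b} = {b} := by ext x; simp
    rw [MeasureTheory.ae_iff, hset]
    exact Real.volume_singleton
  have eqR : ∫ S in a..b, weightG g a b S * (deriv (deriv f) S) ^ 2
      = ∫ S in a..b, weightG g' a b S * F S ^ 2 := by
    apply intervalIntegral.integral_congr_ae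
    filter_upwards [hae] with x hxb hxI
    rw [Set.uIoc_of_le hab'] at hxI
    have hxo : x ∈ Set.Ioo a b := ⟨hxI.1, lt_of_le_of_ne hxI.2 hxb⟩
    have hxm : x ∈ Set.Icc a b := Set.Ioo_subset_Icc_self hxo
    have ht0 : (0:ℝ) ≤ (x - a) / (b - a) := by
      apply div_nonneg <;> linarith [hxm.1]
    have ht1 : (x - a) / (b - a) ≤ 1 := by
      rw [div_le_one (by linarith)]
      linarith [hxm.2]
    have hmemi : ∀ ξ : ℝ, 0 ≤ ξ → ξ ≤ 1 → a + (b - a) * ξ ∈ Set.Icc a b := by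
      intro ξ h0 h1
      constructor
      · nlinarith
      · nlinarith
    have hwg : weightG g a b x = weightG g' a b x := by
      unfold weightG
      congr 1
      · apply intervalIntegral.integral_congr
        intro ξ hξ
        rw [Set.uIcc_of_le ht0] at hξ
        have := hmemi ξ hξ.1 (le_trans hξ.2 ht1)
        simp only [hg']
        rw [hcfix _ this]
      · apply intervalIntegral.integral_congr
        intro ξ hξ
        rw [Set.uIcc_of_le ht1] at hξ
        have := hmemi ξ (le_trans ht0 hξ.1) hξ.2
        simp only [hg']
        rw [hcfix _ this]
    have hdd : deriv (deriv f) x = F x := by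
      have hev : deriv f =ᶠ[nhds x] f' := by
        filter_upwards [Ioo_mem_nhds hxo.1 hxo.2] with y hy
        exact (hfd y hy).deriv
      calc deriv (deriv f) x = deriv f' x := hev.deriv_eq
        _ = F x := (hf'd x hxo).deriv
    rw [hwg, hdd]
  rw [eqL, eqR]
  exact key
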